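/- Let s₆ ≈ 2.154 be the unique root in the interval (2,3) of s⁴ − 3s³ + 3s² − 3s + 1 = 0. Fix a real s with 2 ≤ s ≤ s₆ and consider the instance of the favorite-machine scheduling game on two machines with parameter s consisting of three jobs: A of size 1/(s(s − 1)) with favorite machine 2; B of size 1/s with favorite machine 1; and C of size (s − 1)/s with favorite machine 1. Then the allocation assigning A and C to machine 1 and B to machine 2 is a strong equilibrium whose makespan equals (s² − s + 1)/(s² − s), while the optimal makespan of this instance is at most 1. Consequently, the strong price of anarchy at parameter s is at least (s² − s + 1)/(s² − s). -/

import Mathlib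

open Finset

/-- Processing time of job `j` on machine `i` in the favorite-machine model:
`q j` on the favorite machine `f j` and `s * q j` on the other machine. -/
noncomputable def ptime (s : ℝ) {n : ℕ} (q : Fin n → ℝ) (f : Fin n → Fin 2)
    (i : Fin 2) (j : Fin n) : ℝ :=
  if f j = i then q j else s * q j

/-- Load of machine `i` under allocation `x`. -/
noncomputable def load (s : ℝ) {n : ℕ} (q : Fin n → ℝ) (f : Fin n → Fin 2)
    (x : Fin n → Fin 2) (i : Fin 2) : ℝ :=
  ∑ j ∈ Finset.univ.filter (fun j => x j = i), ptime s q f i j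

/-- Makespan (maximum load) of allocation `x`. -/
noncomputable def makespan (s : ℝ) {n : ℕ} (q : Fin n → ℝ) (f : Fin n → Fin 2)
    (x : Fin n → Fin 2) : ℝ :=
  max (load s q f x 0) (load s q f x 1)

/-- The optimal (minimum) makespan over all allocations. -/
noncomputable def optMakespan (s : ℝ) {n : ℕ} (q : Fin n → ℝ) (f : Fin n → Fin 2) : ℝ :=
  ⨅ y : Fin n → Fin 2, makespan s q f y

/-- Pure Nash equilibrium: no job can move to the other machine and find there
a load smaller than its current cost. -/
def IsNE (s : ℝ) {n : ℕ} (q : Fin n → ℝ) (f : Fin n → Fin 2)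
    (x : Fin n → Fin 2) : Prop :=
  ∀ j : Fin n, ∀ i : Fin 2, i ≠ x j →
    load s q f x (x j) ≤ load s q f (Function.update x j i) i

/-- Strong equilibrium: for every deviation `y` differing from `x` on a nonempty
set of jobs, some deviating job does not improve its cost. -/
def IsSE (s : ℝ) {n : ℕ} (q : Fin n → ℝ) (f : Fin n → Fin 2)
    (x : Fin n → Fin 2) : Prop :=
  ∀ y : Fin n → Fin 2, (∃ j, y j ≠ x j) →
    ∃ j, y j ≠ x j ∧ load s q f x (x j) ≤ load s q f y (y j)

lemma load_eq (s : ℝ) {n : ℕ} (q : Fin n → ℝ) (f : Fin n → Fin 2)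
    (x : Fin n → Fin 2) (i : Fin 2) :
    load s q f x i = ∑ j, if x j = i then ptime s q f i j else 0 := by
  rw [load, Finset.sum_filter]

set_option maxHeartbeats 1600000 in
theorem spoa_lower_interval6
    (s₆ : ℝ) (hs₆lo : 2 < s₆) (hs₆hi : s₆ < 3)
    (hs₆root : s₆^4 - 3*s₆^3 + 3*s₆^2 - 3*s₆ + 1 = 0)
    (s : ℝ) (hs : 2 ≤ s) (hs' : s ≤ s₆)
    (q : Fin 3 → ℝ) (hq : q = ![1/(s*(s - 1)), 1/s, (s - 1)/s])
    (f : Fin 3 → Fin 2) (hf : f = ![1, 0, 0])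
    (x : Fin 3 → Fin 2) (hx : x = ![0, 1, 0]) :
    IsSE s q f x ∧
      makespan s q f x = (s^2 - s + 1)/(s^2 - s) ∧
      optMakespan s q f ≤ 1 ∧
      ((s^2 - s + 1)/(s^2 - s)) * optMakespan s q f ≤ makespan s q f x := by
  subst hq hf hx
  have hs0 : (0:ℝ) < s := by linarith
  have hm : (0:ℝ) < s - 1 := by linarith
  have hD : (0:ℝ) < s * (s - 1) := by positivity
  have hne : s ≠ 0 := ne_of_gt hs0
  have hmne : s - 1 ≠ 0 := ne_of_gt hm
  set q : Fin 3 → ℝ := ![1/(s*(s - 1)), 1/s, (s - 1)/s] with hq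
  set f : Fin 3 → Fin 2 := ![1, 0, 0] with hf
  set x : Fin 3 → Fin 2 := ![0, 1, 0] with hx
  -- the key consequence of s ≤ s₆
  have hA : s₆^2 - 3*s₆ + 1 < 0 := by
    by_contra h
    push_neg at h
    nlinarith [mul_nonneg (mul_pos (by linarith : (0:ℝ) < s₆) (by linarith : (0:ℝ) < s₆)).le h,
      sq_nonneg (s₆ - 2)]
  have hkey : s^2 - 3*s + 1 ≤ 0 := by
    nlinarith [mul_nonneg (by linarith : (0:ℝ) ≤ s₆ - s) (by linarith : (0:ℝ) ≤ s + s₆ - 3)]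
  -- loads under x
  have Lx0 : load s q f x 0 = (s^2 - s + 1)/(s*(s-1)) := by
    simp [load_eq, Fin.sum_univ_three, ptime, hq, hf, hx]
    field_simp
    ring
  have Lx1 : load s q f x 1 = 1 := by
    simp [load_eq, Fin.sum_univ_three, ptime, hq, hf, hx]
    field_simp
  have hMge1 : (1:ℝ) ≤ (s^2 - s + 1)/(s^2 - s) := by
    rw [le_div_iff₀ (by nlinarith)]
    nlinarith
  have hSE : IsSE s q f x := by
    intro y hy
    have two : ∀ i : Fin 2, i = 0 ∨ i = 1 := by decide
    rcases two (y 0) with h0 | h0 <;> rcases two (y 1) with h1 | h1 <;>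
      rcases two (y 2) with h2 | h2
    · -- (0,0,0) : B deviates
      refine ⟨1, by rw [h1]; decide, ?_⟩
      have eR : load s q f y 0 = s^2/(s*(s-1)) := by
        simp [load_eq, Fin.sum_univ_three, ptime, h0, h1, h2, hq, hf]
        field_simp
        ring
      rw [h1, show x 1 = (1 : Fin 2) from rfl, Lx1, eR, le_div_iff₀ hD]
      nlinarith
    · -- (0,0,1) : B deviates; needs s² - 3s + 1 ≤ 0
      refine ⟨1, by rw [h1]; decide, ?_⟩
      have eR : load s q f y 0 = (2*s - 1)/(s*(s-1)) := by
        simp [load_eq, Fin.sum_univ_three, ptime, h0, h1, h2, hq, hf]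
        field_simp
        ring
      rw [h1, show x 1 = (1 : Fin 2) from rfl, Lx1, eR, le_div_iff₀ hD]
      nlinarith
    · -- (0,1,0) = x : contradiction
      exfalso; obtain ⟨j, hj⟩ := hy
      fin_cases j
      · exact hj h0
      · exact hj h1
      · exact hj h2
    · -- (0,1,1) : C deviates
      refine ⟨2, by rw [h2]; decide, ?_⟩
      have eR : load s q f y 1 = s := by
        simp [load_eq, Fin.sum_univ_three, ptime, h0, h1, h2, hq, hf]
        field_simp
        ring
      rw [h2, show x 2 = (0 : Fin 2) from rfl, Lx0, eR, div_le_iff₀ hD]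
      nlinarith
    · -- (1,0,0) : B deviates, ends with load 1
      refine ⟨1, by rw [h1]; decide, ?_⟩
      have eR : load s q f y 0 = 1 := by
        simp [load_eq, Fin.sum_univ_three, ptime, h0, h1, h2, hq, hf]
        field_simp
        ring
      rw [h1, show x 1 = (1 : Fin 2) from rfl, Lx1, eR]
    · -- (1,0,1) : A deviates
      refine ⟨0, by rw [h0]; decide, ?_⟩
      have eR : load s q f y 1 = (1 + s*(s-1)^2)/(s*(s-1)) := by
        simp [load_eq, Fin.sum_univ_three, ptime, h0, h1, h2, hq, hf]
        field_simp
      rw [h0, show x 0 = (0 : Fin 2) from rfl, Lx0, eR,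
        div_le_div_iff₀ hD hD]
      nlinarith [mul_nonneg (mul_nonneg hs0.le hm.le) (by linarith : (0:ℝ) ≤ s - 2),
        mul_pos hD hD]
    · -- (1,1,0) : A deviates, equality
      refine ⟨0, by rw [h0]; decide, ?_⟩
      have eR : load s q f y 1 = (s^2 - s + 1)/(s*(s-1)) := by
        simp [load_eq, Fin.sum_univ_three, ptime, h0, h1, h2, hq, hf]
        field_simp
        ring
      rw [h0, show x 0 = (0 : Fin 2) from rfl, Lx0, eR]
    · -- (1,1,1) : A deviates
      refine ⟨0, by rw [h0]; decide, ?_⟩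
      have eR : load s q f y 1 = (1 + s^2*(s-1))/(s*(s-1)) := by
        simp [load_eq, Fin.sum_univ_three, ptime, h0, h1, h2, hq, hf]
        field_simp
        ring
      rw [h0, show x 0 = (0 : Fin 2) from rfl, Lx0, eR,
        div_le_div_iff₀ hD hD]
      nlinarith [mul_nonneg (mul_nonneg hs0.le hs0.le) (by linarith : (0:ℝ) ≤ s - 2),
        mul_pos hD hD]
  have hmx : makespan s q f x = (s^2 - s + 1)/(s^2 - s) := by
    rw [makespan, Lx0, Lx1, show s*(s-1) = s^2 - s by ring]
    exact max_eq_left (le_trans (by norm_num) hMge1)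
  -- the optimum is at most 1
  have hload0 : ∀ (y : Fin 3 → Fin 2) i, 0 ≤ load s q f y i := by
    intro y i
    apply Finset.sum_nonneg
    intro j _
    have hqj : 0 ≤ q j := by
      fin_cases j <;> simp [hq] <;> positivity
    unfold ptime
    split
    · exact hqj
    · exact mul_nonneg hs0.le hqj
  have hbdd : BddBelow (Set.range fun y : Fin 3 → Fin 2 => makespan s q f y) := by
    refine ⟨0, ?_⟩
    rintro _ ⟨y, rfl⟩
    exact le_max_of_le_left (hload0 y 0)
  have hopt : optMakespan s q f ≤ 1 := by
    have h1' : makespan s q f f ≤ 1 := by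
      have e0 : load s q f f 0 = 1 := by
        simp [load_eq, Fin.sum_univ_three, ptime, hq, hf]
        field_simp
        ring
      have e1 : load s q f f 1 = 1/(s*(s-1)) := by
        simp [load_eq, Fin.sum_univ_three, ptime, hq, hf]
      rw [makespan, e0, e1]
      apply max_le le_rfl
      rw [div_le_one hD]
      nlinarith
    exact le_trans (ciInf_le hbdd f) h1'
  have hoptnn : 0 ≤ optMakespan s q f :=
    le_ciInf fun y => le_max_of_le_left (hload0 y 0)
  refine ⟨hSE, hmx, hopt, ?_⟩
  calc ((s^2 - s + 1)/(s^2 - s)) * optMakespan s q f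
      ≤ ((s^2 - s + 1)/(s^2 - s)) * 1 :=
        mul_le_mul_of_nonneg_left hopt (by linarith)
    _ = (s^2 - s + 1)/(s^2 - s) := mul_one _
    _ = makespan s q f x := hmx.symm
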